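/- Let Q be a k-labeled quantum incidence graph and L a k-labeled incidence graph. (i) For every X_R ⊆ dom_r(Q) with ℓ := |X_R|: hom(Q − X_R, L) = Σ_{v⃗ ∈ V_R(I_L)^ℓ} hom(Q, L[X_R → v⃗]). (ii) For every X_B ⊆ dom_b(Q) with ℓ := |X_B|: hom(Q − X_B, L) = Σ_{e⃗ ∈ V_B(I_L)^ℓ} hom(Q, L[X_B → e⃗]). (iii) For every transition f for g_Q, setting X_B := dom_b(Q) ∩ img(f) ∩ img(g_Q) and ℓ := |X_B|: hom(⟨Q⟩_f, L) = hom(L^f, L) · Σ_{e⃗ ∈ V_B(I_L)^ℓ} hom(Q, L[X_B → e⃗]), and moreover hom(L^f, L) ∈ {0, 1}. -/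

import Mathlib

set_option autoImplicit false

noncomputable section

/-! ### Incidence graphs -/

/-- An incidence graph: finite sets of red nodes and blue nodes (realised as two
disjoint finite types), edges from blue nodes to red nodes, every red node adjacent
to at least one blue node. -/
structure IncGraph where
  R : Type
  B : Type
  [finR : Finite R]
  [finB : Finite B]
  E : B → R → Prop
  covered : ∀ v : R, ∃ e : B, E e v

attribute [instance] IncGraph.finR IncGraph.finB

/-- The neighbourhood of a blue node. -/
def IncGraph.nbhd (I : IncGraph) (e : I.B) : Set I.R := {v | I.E e v}

/-- Homomorphisms between incidence graphs. -/
def IncHom (J I : IncGraph) : Type :=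
  {h : (J.R → I.R) × (J.B → I.B) // ∀ e v, J.E e v → I.E (h.2 e) (h.1 v)}

/-- The number of homomorphisms between incidence graphs. -/
def homCount (J I : IncGraph) : ℕ := Nat.card (IncHom J I)

/-- Homomorphism indistinguishability over a class of incidence graphs. -/
def HomIndist (C : Set IncGraph) (I I' : IncGraph) : Prop :=
  ∀ J ∈ C, homCount J I = homCount J I'

/-- Isomorphism of incidence graphs. -/
def IncIso (I I' : IncGraph) : Prop :=
  ∃ (πR : I.R ≃ I'.R) (πB : I.B ≃ I'.B), ∀ e v, I.E e v ↔ I'.E (πB e) (πR v)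

/-! ### Hypergraphs -/

structure IncHypergraph where
  V : Type
  Edge : Type
  [finV : Finite V]
  [finE : Finite Edge]
  f : Edge → Set V
  covered : ∀ v : V, ∃ e : Edge, v ∈ f e

attribute [instance] IncHypergraph.finV IncHypergraph.finE

/-- A hypergraph is simple if its incidence function is injective. -/
def IncHypergraph.Simple (H : IncHypergraph) : Prop := Function.Injective H.f

/-- The incidence graph of a hypergraph. -/
def IncHypergraph.inc (H : IncHypergraph) : IncGraph where
  R := H.V
  B := H.Edge
  E := fun e v => v ∈ H.f e
  covered := H.covered

/-- Homomorphisms between hypergraphs. -/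
def HypHom (F H : IncHypergraph) : Type :=
  {h : (F.V → H.V) × (F.Edge → H.Edge) // ∀ e, H.f (h.2 e) = h.1 '' F.f e}

/-- The number of homomorphisms between hypergraphs. -/
def hhomCount (F H : IncHypergraph) : ℕ := Nat.card (HypHom F H)

/-- Homomorphism indistinguishability over a class of hypergraphs. -/
def HypHomIndist (C : Set IncHypergraph) (H H' : IncHypergraph) : Prop :=
  ∀ F ∈ C, hhomCount F H = hhomCount F H'

/-! ### Hypertree decompositions -/

/-- A complete generalised hypertree decomposition of an incidence graph. -/
structure GHD (I : IncGraph) where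
  T : Type
  [finT : Finite T]
  tr : SimpleGraph T
  isTree : tr.IsTree
  Bag : T → Set I.R
  Cover : T → Set I.B
  complete : ∀ e : I.B, ∃ t, I.nbhd e ⊆ Bag t ∧ e ∈ Cover t
  connR : ∀ v : I.R, (tr.induce {t | v ∈ Bag t}).Connected
  covering : ∀ t, Bag t ⊆ ⋃ e ∈ Cover t, I.nbhd e

attribute [instance] GHD.finT

/-- The decomposition has width at most `k`. -/
def GHD.widthLe {I : IncGraph} (D : GHD I) (k : ℕ) : Prop :=
  ∀ t, (D.Cover t).ncard ≤ k

/-- An entangled hypertree decomposition. -/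
structure EHD (I : IncGraph) extends GHD I where
  precise : ∀ t, (⋃ e ∈ Cover t, I.nbhd e) = Bag t
  connB : ∀ e : I.B, (tr.induce {t | e ∈ Cover t}).Connected

/-- Incidence graphs of generalised hypertree width at most `k`. -/
def IGHW (k : ℕ) : Set IncGraph := {I | ∃ D : GHD I, D.widthLe k}

/-- Incidence graphs of entangled hypertree width at most `k`. -/
def IEHW (k : ℕ) : Set IncGraph := {I | ∃ D : EHD I, D.toGHD.widthLe k}

/-- Hypergraphs of generalised hypertree width at most `k`. -/
def GHWclass (k : ℕ) : Set IncHypergraph := {H | H.inc ∈ IGHW k}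

/-- Simple hypergraphs of generalised hypertree width at most `k`. -/
def SGHWclass (k : ℕ) : Set IncHypergraph := {H | H.Simple ∧ H.inc ∈ IGHW k}

/-- Adding `n` fresh blue nodes whose neighbourhood is exactly `s`. -/
def IncGraph.addBlue (J : IncGraph) (s : Set J.R) (n : ℕ) : IncGraph where
  R := J.R
  B := J.B ⊕ Fin n
  E := fun e v => Sum.elim (fun e₁ => J.E e₁ v) (fun _ => v ∈ s) e
  covered := fun v => by
    obtain ⟨e, he⟩ := J.covered v
    exact ⟨Sum.inl e, he⟩

/-! ### Guard functions -/

/-- A guard function: a partial map from red-variable indices to `[k]`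
with finite domain. -/
structure GuardF (k : ℕ) where
  f : ℕ → Option (Fin k)
  fin : {i | (f i).isSome}.Finite

namespace GuardF

variable {k : ℕ}

/-- The domain of a guard function. -/
def dom (g : GuardF k) : Finset ℕ := g.fin.toFinset

open Classical in
/-- The image of a guard function. -/
def img (g : GuardF k) : Finset (Fin k) :=
  Finset.univ.filter fun j => ∃ i, g.f i = some j

theorem mem_dom {g : GuardF k} {i : ℕ} : i ∈ g.dom ↔ (g.f i).isSome := by
  simp [dom, Set.Finite.mem_toFinset]

theorem mem_img {g : GuardF k} {j : Fin k} : j ∈ g.img ↔ ∃ i, g.f i = some j := by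
  classical
  simp [img]

/-- Union of two guard functions (the first takes precedence). -/
def union (g₁ g₂ : GuardF k) : GuardF k where
  f := fun i => (g₁.f i).or (g₂.f i)
  fin := by
    apply (g₁.fin.union g₂.fin).subset
    intro i hi
    simp only [Set.mem_setOf_eq, Option.isSome_or, Bool.or_eq_true] at hi
    exact hi

/-- Removing a set of indices from the domain of a guard function. -/
def remove (g : GuardF k) (s : Finset ℕ) : GuardF k where
  f := fun i => if i ∈ s then none else g.f i
  fin := by
    apply g.fin.subset
    intro i hi
    simp only [Set.mem_setOf_eq] at hi ⊢
    by_cases h : i ∈ s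
    · simp [h] at hi
    · simpa [h] using hi

/-- Two guard functions are compatible if they agree on the intersection
of their domains. -/
def Compatible (g₁ g₂ : GuardF k) : Prop :=
  ∀ i j₁ j₂, g₁.f i = some j₁ → g₂.f i = some j₂ → j₁ = j₂

/-- `f` is a transition for `g`. -/
def IsTransition (g f : GuardF k) : Prop :=
  f.dom.Nonempty ∧ (∀ i, (f.f i).isSome → (g.f i).isSome) ∧
    ∀ i j, g.f i = some j → j ∈ f.img → (f.f i).isSome

/-- `g ⊆ g'` for guard functions. -/
def le (g g' : GuardF k) : Prop := ∀ i j, g.f i = some j → g'.f i = some j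

end GuardF

/-! ### The logic GC^k -/

/-- Raw syntax of the two-sorted counting logic with guards. Quantifiers carry
the guard function used to guard the quantified formula. -/
inductive Fml (k : ℕ) : Type where
  | top : Fml k
  | E (j : Fin k) (i : ℕ) : Fml k
  | beq (j j' : Fin k) : Fml k
  | req (i i' : ℕ) : Fml k
  | not (ψ : Fml k) : Fml k
  | and (ψ₁ ψ₂ : Fml k) : Fml k
  | exR (n : ℕ) (s : Finset ℕ) (g : GuardF k) (ψ : Fml k) : Fml k
  | exB (n : ℕ) (s : Finset (Fin k)) (g : GuardF k) (ψ : Fml k) : Fml k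

/-- Indices of free red variables of a formula.  For the quantified formulas the
quantified body is `(α_g ∧ ψ)`. -/
def freeR {k : ℕ} : Fml k → Finset ℕ
  | .top => ∅
  | .E _ i => {i}
  | .beq _ _ => ∅
  | .req i i' => {i, i'}
  | .not ψ => freeR ψ
  | .and ψ₁ ψ₂ => freeR ψ₁ ∪ freeR ψ₂
  | .exR _ s g ψ => (g.dom ∪ freeR ψ) \ s
  | .exB _ _ g ψ => g.dom ∪ freeR ψ

/-- Indices of free blue variables of a formula. -/
def freeB {k : ℕ} : Fml k → Finset (Fin k)
  | .top => ∅
  | .E j _ => {j}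
  | .beq j j' => {j, j'}
  | .req _ _ => ∅
  | .not ψ => freeB ψ
  | .and ψ₁ ψ₂ => freeB ψ₁ ∪ freeB ψ₂
  | .exR _ _ g ψ => g.img ∪ freeB ψ
  | .exB _ s g ψ => (g.img ∪ freeB ψ) \ s

/-- Updating a red assignment on the variables in `s`. -/
def updR {R : Type} (βR : ℕ → R) (s : Finset ℕ) (a : ↥s → R) : ℕ → R :=
  fun i => if h : i ∈ s then a ⟨i, h⟩ else βR i

/-- Updating a blue assignment on the variables in `s`. -/
def updB {k : ℕ} {B : Type} (βB : Fin k → B) (s : Finset (Fin k)) (a : ↥s → B) : Fin k → B :=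
  fun j => if h : j ∈ s then a ⟨j, h⟩ else βB j

/-- Satisfaction of the guard formula `α_g` in an interpretation. -/
def GuardSat {k : ℕ} (I : IncGraph) (βB : Fin k → I.B) (βR : ℕ → I.R) (g : GuardF k) : Prop :=
  ∀ i j, g.f i = some j → I.E (βB j) (βR i)

/-- Satisfaction of a formula in an interpretation `(I, β)`. -/
def FmlSat {k : ℕ} (I : IncGraph) : Fml k → (Fin k → I.B) → (ℕ → I.R) → Prop
  | Fml.top, _, _ => True
  | Fml.E j i, βB, βR => I.E (βB j) (βR i)
  | Fml.beq j j', βB, _ => βB j = βB j'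
  | Fml.req i i', _, βR => βR i = βR i'
  | Fml.not ψ, βB, βR => ¬ FmlSat I ψ βB βR
  | Fml.and ψ₁ ψ₂, βB, βR => FmlSat I ψ₁ βB βR ∧ FmlSat I ψ₂ βB βR
  | Fml.exR n s g ψ, βB, βR =>
      n ≤ Nat.card {a : ↥s → I.R //
        GuardSat I βB (updR βR s a) g ∧ FmlSat I ψ βB (updR βR s a)}
  | Fml.exB n s g ψ, βB, βR =>
      n ≤ Nat.card {a : ↥s → I.B //
        GuardSat I (updB βB s a) βR g ∧ FmlSat I ψ (updB βB s a) βR}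

/-- The formulas of the logic `GC^k`. -/
inductive IsGC (k : ℕ) : Fml k → Prop
  | top : IsGC k Fml.top
  | E (j : Fin k) (i : ℕ) : IsGC k (Fml.E j i)
  | beq (j j' : Fin k) : IsGC k (Fml.beq j j')
  | req (i i' : ℕ) : IsGC k (Fml.req i i')
  | not {ψ : Fml k} : IsGC k ψ → IsGC k ψ.not
  | and {ψ₁ ψ₂ : Fml k} : IsGC k ψ₁ → IsGC k ψ₂ → IsGC k (ψ₁.and ψ₂)
  | exR {ψ : Fml k} (n : ℕ) (s : Finset ℕ) (g : GuardF k) :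
      IsGC k ψ → g.dom = freeR ψ → 1 ≤ n → s.Nonempty → s ⊆ g.dom →
      IsGC k (Fml.exR n s g ψ)
  | exB {ψ : Fml k} (n : ℕ) (s : Finset (Fin k)) (g : GuardF k) :
      IsGC k ψ → g.dom = freeR ψ → 1 ≤ n → s.Nonempty → s ⊆ g.img ∪ freeB ψ →
      IsGC k (Fml.exB n s g ψ)

/-- The normal form `NGC^k`: `NGC k g ψ` expresses that `(α_g ∧ ψ)` is a formula
of the fragment `NGC^k`. -/
inductive NGC (k : ℕ) : GuardF k → Fml k → Prop
  | E {g : GuardF k} (j : Fin k) (i : ℕ) : g.dom = {i} → NGC k g (Fml.E j i)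
  | beq {g : GuardF k} (j j' : Fin k) : g.dom = ∅ → NGC k g (Fml.beq j j')
  | req {g : GuardF k} (i i' : ℕ) : g.dom = {i, i'} → NGC k g (Fml.req i i')
  | not {g : GuardF k} {ψ : Fml k} : NGC k g ψ → NGC k g ψ.not
  | and {g₁ g₂ : GuardF k} {ψ₁ ψ₂ : Fml k} :
      NGC k g₁ ψ₁ → NGC k g₂ ψ₂ → GuardF.Compatible g₁ g₂ →
      NGC k (g₁.union g₂) (ψ₁.and ψ₂)
  | exR {g : GuardF k} {ψ : Fml k} (n : ℕ) (s : Finset ℕ) :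
      NGC k g ψ → 1 ≤ n → s.Nonempty → s ⊆ g.dom →
      NGC k (g.remove s) (Fml.exR n s g ψ)
  | exB {g g' : GuardF k} {ψ : Fml k} (n : ℕ) (s : Finset (Fin k)) :
      NGC k g ψ → 1 ≤ n → s.Nonempty → s ⊆ g.img ∪ freeB ψ →
      g'.dom = g.dom →
      (∀ i ∈ g.dom, ∃ j, g'.f i = some j ∧ (g.f i = some j ∨ j ∈ s ∨ j ∉ g.img)) →
      NGC k g' (Fml.exB n s g ψ)

/-- Indistinguishability of two incidence graphs by sentences of `GC^k`. -/
def GCEquiv (k : ℕ) (I I' : IncGraph) : Prop :=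
  ∀ φ : Fml k, IsGC k φ → freeR φ = ∅ → freeB φ = ∅ →
    ((∀ βB βR, FmlSat I φ βB βR) ↔ (∀ βB βR, FmlSat I' φ βB βR))

/-! ### k-labeled incidence graphs -/

/-- A `k`-labeled incidence graph. -/
structure KLI (k : ℕ) where
  I : IncGraph
  r : ℕ → Option I.R
  b : Fin k → Option I.B
  g : GuardF k
  fin_r : {i | (r i).isSome}.Finite

namespace KLI

variable {k : ℕ}

/-- The set of red labels used. -/
def domR (L : KLI k) : Finset ℕ := L.fin_r.toFinset

/-- The set of blue labels used. -/
def domB (L : KLI k) : Finset (Fin k) := Finset.univ.filter fun j => (L.b j).isSome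

/-- `L` has real guards with respect to the partial map `f`. -/
def realGuardsWrt (L : KLI k) (f : ℕ → Option (Fin k)) : Prop :=
  ∀ i j, f i = some j → ∃ v e, L.r i = some v ∧ L.b j = some e ∧ L.I.E e v

/-- `L` has real guards. -/
def realGuards (L : KLI k) : Prop := L.realGuardsWrt L.g.f

/-- Removing red labels. -/
def removeR (L : KLI k) (X : Finset ℕ) : KLI k where
  I := L.I
  r := fun i => if i ∈ X then none else L.r i
  b := L.b
  g := L.g.remove X
  fin_r := by
    apply L.fin_r.subset
    intro i hi
    simp only [Set.mem_setOf_eq] at hi ⊢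
    by_cases h : i ∈ X
    · simp [h] at hi
    · simpa [h] using hi

/-- Removing blue labels. -/
def removeB (L : KLI k) (X : Finset (Fin k)) : KLI k where
  I := L.I
  r := L.r
  b := fun j => if j ∈ X then none else L.b j
  g := L.g
  fin_r := L.fin_r

/-- Moving the red labels in `X` onto the nodes given by `a`. -/
def reseatR (L : KLI k) (X : Finset ℕ) (a : ↥X → L.I.R) : KLI k where
  I := L.I
  r := fun i => if h : i ∈ X then some (a ⟨i, h⟩) else L.r i
  b := L.b
  g := L.g
  fin_r := by
    apply (L.fin_r.union X.finite_toSet).subset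
    intro i hi
    simp only [Set.mem_setOf_eq] at hi
    by_cases h : i ∈ X
    · exact Or.inr (by simpa using h)
    · exact Or.inl (by simpa [h] using hi)

/-- Moving the blue labels in `X` onto the nodes given by `a`. -/
def reseatB (L : KLI k) (X : Finset (Fin k)) (a : ↥X → L.I.B) : KLI k where
  I := L.I
  r := L.r
  b := fun j => if h : j ∈ X then some (a ⟨j, h⟩) else L.b j
  g := L.g
  fin_r := L.fin_r

/-- The identifications of red nodes when glueing. -/
def glueRelR (L₁ L₂ : KLI k) : (L₁.I.R ⊕ L₂.I.R) → (L₁.I.R ⊕ L₂.I.R) → Prop :=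
  fun x y => ∃ i v₁ v₂, L₁.r i = some v₁ ∧ L₂.r i = some v₂ ∧ x = Sum.inl v₁ ∧ y = Sum.inr v₂

/-- The identifications of blue nodes when glueing. -/
def glueRelB (L₁ L₂ : KLI k) : (L₁.I.B ⊕ L₂.I.B) → (L₁.I.B ⊕ L₂.I.B) → Prop :=
  fun x y => ∃ j e₁ e₂, L₁.b j = some e₁ ∧ L₂.b j = some e₂ ∧ x = Sum.inl e₁ ∧ y = Sum.inr e₂

/-- The incidence graph underlying the glueing of two labeled incidence graphs. -/
def glueIG (L₁ L₂ : KLI k) : IncGraph where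
  R := Quot (glueRelR L₁ L₂)
  B := Quot (glueRelB L₁ L₂)
  finR := Finite.of_surjective (Quot.mk (glueRelR L₁ L₂))
    (fun q => Quot.inductionOn q fun a => ⟨a, rfl⟩)
  finB := Finite.of_surjective (Quot.mk (glueRelB L₁ L₂))
    (fun q => Quot.inductionOn q fun a => ⟨a, rfl⟩)
  E := fun e v =>
    (∃ e₁ v₁, L₁.I.E e₁ v₁ ∧ e = Quot.mk (glueRelB L₁ L₂) (Sum.inl e₁) ∧
      v = Quot.mk (glueRelR L₁ L₂) (Sum.inl v₁)) ∨
    (∃ e₂ v₂, L₂.I.E e₂ v₂ ∧ e = Quot.mk (glueRelB L₁ L₂) (Sum.inr e₂) ∧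
      v = Quot.mk (glueRelR L₁ L₂) (Sum.inr v₂))
  covered := by
    intro v
    induction v using Quot.ind with
    | _ x =>
      cases x with
      | inl v₁ =>
        obtain ⟨e₁, he⟩ := L₁.I.covered v₁
        exact ⟨Quot.mk (glueRelB L₁ L₂) (Sum.inl e₁), Or.inl ⟨e₁, v₁, he, rfl, rfl⟩⟩
      | inr v₂ =>
        obtain ⟨e₂, he⟩ := L₂.I.covered v₂
        exact ⟨Quot.mk (glueRelB L₁ L₂) (Sum.inr e₂), Or.inr ⟨e₂, v₂, he, rfl, rfl⟩⟩

/-- Glueing two `k`-labeled incidence graphs. -/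
def glue (L₁ L₂ : KLI k) : KLI k where
  I := glueIG L₁ L₂
  r := fun i =>
    match L₁.r i with
    | some v => some (Quot.mk (glueRelR L₁ L₂) (Sum.inl v))
    | none => (L₂.r i).map fun v => Quot.mk (glueRelR L₁ L₂) (Sum.inr v)
  b := fun j =>
    match L₁.b j with
    | some e => some (Quot.mk (glueRelB L₁ L₂) (Sum.inl e))
    | none => (L₂.b j).map fun e => Quot.mk (glueRelB L₁ L₂) (Sum.inr e)
  g := L₁.g.union L₂.g
  fin_r := by
    apply (L₁.fin_r.union L₂.fin_r).subset
    intro i hi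
    simp only [Set.mem_setOf_eq] at hi
    cases h₁ : L₁.r i with
    | some v => exact Or.inl (by simp [h₁])
    | none =>
      right
      rw [h₁] at hi
      revert hi
      cases h₂ : L₂.r i <;> simp [h₂] <;> rfl

/-- The `k`-labeled incidence graph `L^f` defined by a guard function `f`. -/
def guardKLI (f : GuardF k) : KLI k where
  I := { R := {i : ℕ // i ∈ f.dom}
         B := {j : Fin k // j ∈ f.img}
         E := fun j i => f.f i.1 = some j.1
         covered := by
           rintro ⟨i, hi⟩
           have hs : (f.f i).isSome := GuardF.mem_dom.mp hi
           have hj : (f.f i).get hs ∈ f.img :=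
             GuardF.mem_img.mpr ⟨i, (Option.some_get hs).symm⟩
           exact ⟨⟨(f.f i).get hs, hj⟩, (Option.some_get hs).symm⟩ }
  r := fun i => if h : i ∈ f.dom then some ⟨i, h⟩ else none
  b := fun j => if h : j ∈ f.img then some ⟨j, h⟩ else none
  g := f
  fin_r := by
    apply f.dom.finite_toSet.subset
    intro i hi
    simp only [Set.mem_setOf_eq] at hi
    by_cases h : i ∈ f.dom
    · simpa using h
    · simp [h] at hi

/-- Applying a transition `f` to `L`. -/
def applyTransition (L : KLI k) (f : GuardF k) : KLI k :=
  (guardKLI f).glue (L.removeB (L.g.img ∩ f.img ∩ L.domB))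

end KLI

/-- The class `GLI^k` of guarded `k`-labeled incidence graphs. -/
inductive GLI (k : ℕ) : KLI k → Prop
  | base (L : KLI k) :
      (∀ v : L.I.R, ∃ i, L.r i = some v) →
      (∀ e : L.I.B, ∃ j, L.b j = some e) →
      (∀ i, (L.r i).isSome ↔ (L.g.f i).isSome) →
      L.realGuards → GLI k L
  | removeR (L : KLI k) (X : Finset ℕ) :
      GLI k L → (∀ i ∈ X, (L.r i).isSome) → GLI k (L.removeR X)
  | removeB (L : KLI k) (X : Finset (Fin k)) :
      GLI k L → (∀ j ∈ X, (L.b j).isSome ∧ j ∉ L.g.img) → GLI k (L.removeB X)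
  | trans (L : KLI k) (f : GuardF k) :
      GLI k L → L.g.IsTransition f → GLI k (L.applyTransition f)
  | glue (L L' : KLI k) :
      GLI k L → GLI k L' → GuardF.Compatible L.g L'.g → GLI k (L.glue L')

/-- Two `k`-labeled incidence graphs are compatible. -/
def KCompatible {k : ℕ} (L L' : KLI k) : Prop :=
  (∀ i, (L.r i).isSome ↔ (L'.r i).isSome) ∧
  (∀ j, (L.b j).isSome ↔ (L'.b j).isSome) ∧ L.g.f = L'.g.f

/-- Homomorphisms between `k`-labeled incidence graphs: they respect the labels
and ignore the guard functions. -/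
def KHom {k : ℕ} (L L' : KLI k) : Type :=
  {h : (L.I.R → L'.I.R) × (L.I.B → L'.I.B) //
    (∀ e v, L.I.E e v → L'.I.E (h.2 e) (h.1 v)) ∧
    (∀ i v, L.r i = some v → L'.r i = some (h.1 v)) ∧
    (∀ j e, L.b j = some e → L'.b j = some (h.2 e))}

/-- The number of homomorphisms between `k`-labeled incidence graphs. -/
def khom {k : ℕ} (L L' : KLI k) : ℕ := Nat.card (KHom L L')

/-! ### Quantum incidence graphs -/

/-- A formal linear combination of `k`-labeled incidence graphs, given as a list
of coefficient/component pairs. -/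
abbrev QIG (k : ℕ) := List (ℝ × KLI k)

/-- `Q` is a `k`-labeled quantum incidence graph: it is a nonempty formal linear
combination of pairwise compatible `k`-labeled incidence graphs. -/
def IsQuantum {k : ℕ} (Q : QIG k) : Prop :=
  Q ≠ [] ∧ ∀ p ∈ Q, ∀ q ∈ Q, KCompatible p.2 q.2

/-- Homomorphism count from a quantum incidence graph. -/
def qhom {k : ℕ} (Q : QIG k) (L : KLI k) : ℝ :=
  (Q.map fun p => p.1 * (khom p.2 L : ℝ)).sum

/-- Glueing of quantum incidence graphs. -/
def qglue {k : ℕ} (Q Q' : QIG k) : QIG k :=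
  Q.flatMap fun p => Q'.map fun q => (p.1 * q.1, p.2.glue q.2)

/-- Componentwise removal of red labels. -/
def qremoveR {k : ℕ} (Q : QIG k) (X : Finset ℕ) : QIG k :=
  Q.map fun p => (p.1, p.2.removeR X)

/-- Componentwise removal of blue labels. -/
def qremoveB {k : ℕ} (Q : QIG k) (X : Finset (Fin k)) : QIG k :=
  Q.map fun p => (p.1, p.2.removeB X)

/-- Componentwise application of a transition. -/
def qapplyTransition {k : ℕ} (Q : QIG k) (f : GuardF k) : QIG k :=
  Q.map fun p => (p.1, p.2.applyTransition f)

/-- Guarded quantum incidence graphs: all components belong to `GLI^k`. -/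
def IsQGLI {k : ℕ} (Q : QIG k) : Prop := IsQuantum Q ∧ ∀ p ∈ Q, GLI k p.2

end
namespace QhomAux

open KLI

variable {k : ℕ}

instance khomFinite (L L' : KLI k) : Finite (KHom L L') := by
  unfold KHom; exact Subtype.finite

lemma nat_card_sigma {ι : Type} [Fintype ι] {T : ι → Type} [∀ i, Finite (T i)] :
    Nat.card (Σ i, T i) = ∑ i, Nat.card (T i) := by
  letI := fun i => Fintype.ofFinite (T i)
  simp [Nat.card_eq_fintype_card]

lemma nat_card_le_one {α : Type} (h : Subsingleton α) : Nat.card α = 0 ∨ Nat.card α = 1 := by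
  rcases isEmpty_or_nonempty α with he | hn
  · exact Or.inl (Nat.card_of_isEmpty)
  · exact Or.inr (Nat.card_eq_one_iff_unique.mpr ⟨h, hn⟩)

/-! ### Glueing -/

def glueFwd₁ (L₁ L₂ L : KLI k) (h : KHom (L₁.glue L₂) L) : KHom L₁ L :=
  ⟨⟨fun v => h.1.1 (Quot.mk _ (Sum.inl v)), fun e => h.1.2 (Quot.mk _ (Sum.inl e))⟩, by
    refine ⟨?_, ?_, ?_⟩
    · intro e v hev
      exact h.2.1 _ _ (Or.inl ⟨e, v, hev, rfl, rfl⟩)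
    · intro i v hv
      exact h.2.2.1 i _ (by simp [KLI.glue, hv])
    · intro j e he
      exact h.2.2.2 j _ (by simp [KLI.glue, he])⟩

def glueFwd₂ (L₁ L₂ L : KLI k) (h : KHom (L₁.glue L₂) L) : KHom L₂ L :=
  ⟨⟨fun v => h.1.1 (Quot.mk _ (Sum.inr v)), fun e => h.1.2 (Quot.mk _ (Sum.inr e))⟩, by
    refine ⟨?_, ?_, ?_⟩
    · intro e v hev
      exact h.2.1 _ _ (Or.inr ⟨e, v, hev, rfl, rfl⟩)
    · intro i v hv
      cases h1 : L₁.r i with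
      | none => exact h.2.2.1 i _ (by simp [KLI.glue, h1, hv]; rfl)
      | some v₁ =>
        have e2 : Quot.mk (glueRelR L₁ L₂) (Sum.inl v₁) = Quot.mk _ (Sum.inr v) :=
          Quot.sound ⟨i, v₁, v, h1, hv, rfl, rfl⟩
        have := h.2.2.1 i _ (show (L₁.glue L₂).r i = some (Quot.mk _ (Sum.inl v₁)) by
          simp [KLI.glue, h1]; rfl)
        rwa [e2] at this
    · intro j e he
      cases h1 : L₁.b j with
      | none => exact h.2.2.2 j _ (by simp [KLI.glue, h1, he]; rfl)
      | some e₁ =>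
        have e2 : Quot.mk (glueRelB L₁ L₂) (Sum.inl e₁) = Quot.mk _ (Sum.inr e) :=
          Quot.sound ⟨j, e₁, e, h1, he, rfl, rfl⟩
        have := h.2.2.2 j _ (show (L₁.glue L₂).b j = some (Quot.mk _ (Sum.inl e₁)) by
          simp [KLI.glue, h1]; rfl)
        rwa [e2] at this⟩

def glueBwd (L₁ L₂ L : KLI k) (h₁ : KHom L₁ L) (h₂ : KHom L₂ L) : KHom (L₁.glue L₂) L :=
  ⟨⟨Quot.lift (Sum.elim h₁.1.1 h₂.1.1) (by
      rintro x y ⟨i, v₁, v₂, hv₁, hv₂, rfl, rfl⟩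
      have a := h₁.2.2.1 i v₁ hv₁
      have b := h₂.2.2.1 i v₂ hv₂
      exact Option.some_inj.mp (a.symm.trans b)),
    Quot.lift (Sum.elim h₁.1.2 h₂.1.2) (by
      rintro x y ⟨j, e₁, e₂, he₁, he₂, rfl, rfl⟩
      have a := h₁.2.2.2 j e₁ he₁
      have b := h₂.2.2.2 j e₂ he₂
      exact Option.some_inj.mp (a.symm.trans b))⟩, by
    refine ⟨?_, ?_, ?_⟩
    · rintro e v (⟨e₁, v₁, hev, rfl, rfl⟩ | ⟨e₂, v₂, hev, rfl, rfl⟩)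
      · exact h₁.2.1 _ _ hev
      · exact h₂.2.1 _ _ hev
    · intro i v hv
      cases h1 : L₁.r i with
      | some v₁ =>
        have : v = Quot.mk (glueRelR L₁ L₂) (Sum.inl v₁) := by
          simp [KLI.glue, h1] at hv; exact (Option.some.inj hv).symm
        subst this
        exact h₁.2.2.1 i v₁ h1
      | none =>
        have hv' : (L₂.r i).map (fun v => Quot.mk (glueRelR L₁ L₂) (Sum.inr v)) = some v := by
          simp [KLI.glue, h1] at hv; exact hv
        obtain ⟨v₂, hv₂, rfl⟩ := Option.map_eq_some_iff.mp hv'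
        exact h₂.2.2.1 i v₂ hv₂
    · intro j e he
      cases h1 : L₁.b j with
      | some e₁ =>
        have : e = Quot.mk (glueRelB L₁ L₂) (Sum.inl e₁) := by
          simp [KLI.glue, h1] at he; exact (Option.some.inj he).symm
        subst this
        exact h₁.2.2.2 j e₁ h1
      | none =>
        have he' : (L₂.b j).map (fun e => Quot.mk (glueRelB L₁ L₂) (Sum.inr e)) = some e := by
          simp [KLI.glue, h1] at he; exact he
        obtain ⟨e₂, he₂, rfl⟩ := Option.map_eq_some_iff.mp he'
        exact h₂.2.2.2 j e₂ he₂⟩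

lemma khom_glue (L₁ L₂ L : KLI k) : khom (L₁.glue L₂) L = khom L₁ L * khom L₂ L := by
  unfold khom
  rw [← Nat.card_prod]
  exact Nat.card_congr
    { toFun := fun h => (glueFwd₁ L₁ L₂ L h, glueFwd₂ L₁ L₂ L h)
      invFun := fun p => glueBwd L₁ L₂ L p.1 p.2
      left_inv := by
        intro h
        apply Subtype.ext
        refine Prod.ext ?_ ?_
        · funext q
          induction q using Quot.ind with
          | _ x => cases x <;> rfl
        · funext q
          induction q using Quot.ind with
          | _ x => cases x <;> rfl
      right_inv := fun p => rfl }

end QhomAux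
namespace QhomAux

open KLI

variable {k : ℕ}

/-- Extensionality for the sigma types appearing below. -/
lemma sigma_khom_extR {L₀ L : KLI k} {X : Finset ℕ}
    {x y : Σ a : (↥X → L.I.R), KHom L₀ (L.reseatR X a)}
    (h1 : x.1 = y.1) (h2 : x.2.1 = y.2.1) : x = y := by
  obtain ⟨a, h⟩ := x
  obtain ⟨b, g⟩ := y
  dsimp at h1
  subst h1
  exact congrArg _ (Subtype.ext h2)

/-! ### Red label removal/reseating -/

def reseatRFwd (L₀ L : KLI k) (X : Finset ℕ) (hX : ∀ i ∈ X, (L₀.r i).isSome)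
    (h : KHom (L₀.removeR X) L) :
    Σ a : (↥X → L.I.R), KHom L₀ (L.reseatR X a) :=
  ⟨fun i => h.1.1 ((L₀.r i.1).get (hX i.1 i.2)),
   ⟨h.1, by
      refine ⟨h.2.1, ?_, h.2.2.2⟩
      intro i v hv
      by_cases hi : i ∈ X
      · have hg : (L₀.r i).get (hX i hi) = v := by
          apply Option.some_inj.mp
          rw [Option.some_get, hv]
        simp only [KLI.reseatR, dif_pos hi]
        rw [hg]
      · have h1 : (L₀.removeR X).r i = some v := by
          simp only [KLI.removeR, if_neg hi]
          exact hv
        have := h.2.2.1 i v h1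
        simp only [KLI.reseatR, dif_neg hi]
        exact this⟩⟩

def reseatRBwd (L₀ L : KLI k) (X : Finset ℕ)
    (p : Σ a : (↥X → L.I.R), KHom L₀ (L.reseatR X a)) : KHom (L₀.removeR X) L :=
  ⟨p.2.1, by
    refine ⟨p.2.2.1, ?_, p.2.2.2.2⟩
    intro i v hv
    have hi : i ∉ X := by
      intro hi
      simp only [KLI.removeR, if_pos hi] at hv
      cases hv
    have h1 : L₀.r i = some v := by
      simpa only [KLI.removeR, if_neg hi] using hv
    have := p.2.2.2.1 i v h1
    simpa only [KLI.reseatR, dif_neg hi] using this⟩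

lemma khom_removeR (L₀ L : KLI k) (X : Finset ℕ) (hX : ∀ i ∈ X, (L₀.r i).isSome)
    [Fintype (↥X → L.I.R)] :
    khom (L₀.removeR X) L = ∑ a : (↥X → L.I.R), khom L₀ (L.reseatR X a) := by
  unfold khom
  rw [← nat_card_sigma]
  refine Nat.card_congr
    { toFun := reseatRFwd L₀ L X hX
      invFun := reseatRBwd L₀ L X
      left_inv := fun h => Subtype.ext rfl
      right_inv := ?_ }
  rintro ⟨a, h⟩
  have ha : (reseatRFwd L₀ L X hX (reseatRBwd L₀ L X ⟨a, h⟩)).1 = a := by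
    funext i
    have h1 : L₀.r i.1 = some ((L₀.r i.1).get (hX i.1 i.2)) := (Option.some_get _).symm
    have := h.2.2.1 i.1 _ h1
    simp only [KLI.reseatR, dif_pos i.2] at this
    exact (Option.some_inj.mp this).symm
  exact sigma_khom_extR ha rfl

end QhomAux
namespace QhomAux

open KLI

variable {k : ℕ}

/-! ### Blue label removal/reseating -/

lemma sigma_khom_extB {L₀ L : KLI k} {X : Finset (Fin k)}
    {x y : Σ a : (↥X → L.I.B), KHom L₀ (L.reseatB X a)}
    (h1 : x.1 = y.1) (h2 : x.2.1 = y.2.1) : x = y := by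
  obtain ⟨a, h⟩ := x
  obtain ⟨b, g⟩ := y
  dsimp at h1
  subst h1
  exact congrArg _ (Subtype.ext h2)

def reseatBFwd (L₀ L : KLI k) (X : Finset (Fin k)) (hX : ∀ j ∈ X, (L₀.b j).isSome)
    (h : KHom (L₀.removeB X) L) :
    Σ a : (↥X → L.I.B), KHom L₀ (L.reseatB X a) :=
  ⟨fun j => h.1.2 ((L₀.b j.1).get (hX j.1 j.2)),
   ⟨h.1, by
      refine ⟨h.2.1, h.2.2.1, ?_⟩
      intro j e he
      by_cases hj : j ∈ X
      · have hg : (L₀.b j).get (hX j hj) = e := by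
          apply Option.some_inj.mp
          rw [Option.some_get, he]
        simp only [KLI.reseatB, dif_pos hj]
        rw [hg]
      · have h1 : (L₀.removeB X).b j = some e := by
          simp only [KLI.removeB, if_neg hj]
          exact he
        have := h.2.2.2 j e h1
        simp only [KLI.reseatB, dif_neg hj]
        exact this⟩⟩

def reseatBBwd (L₀ L : KLI k) (X : Finset (Fin k))
    (p : Σ a : (↥X → L.I.B), KHom L₀ (L.reseatB X a)) : KHom (L₀.removeB X) L :=
  ⟨p.2.1, by
    refine ⟨p.2.2.1, p.2.2.2.1, ?_⟩
    intro j e he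
    have hj : j ∉ X := by
      intro hj
      simp only [KLI.removeB, if_pos hj] at he
      cases he
    have h1 : L₀.b j = some e := by
      simpa only [KLI.removeB, if_neg hj] using he
    have := p.2.2.2.2 j e h1
    simpa only [KLI.reseatB, dif_neg hj] using this⟩

lemma khom_removeB (L₀ L : KLI k) (X : Finset (Fin k)) (hX : ∀ j ∈ X, (L₀.b j).isSome)
    [Fintype (↥X → L.I.B)] :
    khom (L₀.removeB X) L = ∑ a : (↥X → L.I.B), khom L₀ (L.reseatB X a) := by
  unfold khom
  rw [← nat_card_sigma]
  refine Nat.card_congr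
    { toFun := reseatBFwd L₀ L X hX
      invFun := reseatBBwd L₀ L X
      left_inv := fun h => Subtype.ext rfl
      right_inv := ?_ }
  rintro ⟨a, h⟩
  have ha : (reseatBFwd L₀ L X hX (reseatBBwd L₀ L X ⟨a, h⟩)).1 = a := by
    funext j
    have h1 : L₀.b j.1 = some ((L₀.b j.1).get (hX j.1 j.2)) := (Option.some_get _).symm
    have := h.2.2.2 j.1 _ h1
    simp only [KLI.reseatB, dif_pos j.2] at this
    exact (Option.some_inj.mp this).symm
  exact sigma_khom_extB ha rfl

/-! ### Uniqueness of homomorphisms from `guardKLI` -/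

lemma khom_guardKLI_le_one (f : GuardF k) (L : KLI k) :
    khom (KLI.guardKLI f) L = 0 ∨ khom (KLI.guardKLI f) L = 1 := by
  apply nat_card_le_one
  constructor
  intro h h'
  apply Subtype.ext
  refine Prod.ext ?_ ?_
  · funext v
    have hr : (KLI.guardKLI f).r v.1 = some v := by
      simp only [KLI.guardKLI, dif_pos v.2]
      rfl
    have a := h.2.2.1 v.1 v hr
    have b := h'.2.2.1 v.1 v hr
    exact Option.some_inj.mp (a.symm.trans b)
  · funext e
    have hb : (KLI.guardKLI f).b e.1 = some e := by
      simp only [KLI.guardKLI, dif_pos e.2]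
      rfl
    have a := h.2.2.2 e.1 e hb
    have b := h'.2.2.2 e.1 e hb
    exact Option.some_inj.mp (a.symm.trans b)

/-! ### List sum manipulation -/

lemma list_sum_swap {A : Type _} {ι : Type _} [Fintype ι] (l : List A) (G : A → ι → ℝ) :
    (l.map fun p => ∑ i, G p i).sum = ∑ i, (l.map fun p => G p i).sum := by
  induction l with
  | nil => simp
  | cons p l ih => simp [ih, Finset.sum_add_distrib]

end QhomAux

namespace QhomAux

lemma list_sum_mul_left {A : Type _} (l : List A) (c : ℝ) (F : A → ℝ) :
    (l.map fun p => c * F p).sum = c * (l.map F).sum := by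
  induction l with
  | nil => simp
  | cons p l ih => simp [ih, mul_add]

end QhomAux

/-- Let `Q` be a `k`-labeled quantum incidence graph and `L` a
`k`-labeled incidence graph.
(i) For `X_R ⊆ dom_r(Q)`: `hom(Q − X_R, L) = Σ_{v⃗} hom(Q, L[X_R → v⃗])`.
(ii) For `X_B ⊆ dom_b(Q)`: `hom(Q − X_B, L) = Σ_{e⃗} hom(Q, L[X_B → e⃗])`.
(iii) For a transition `f` for `g_Q` and `X_B := dom_b(Q) ∩ img(f) ∩ img(g_Q)`:
`hom(⟨Q⟩_f, L) = hom(L^f, L) · Σ_{e⃗} hom(Q, L[X_B → e⃗])` and `hom(L^f, L) ∈ {0,1}`. -/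
theorem qhom_label_operations (k : ℕ) (Q : QIG k) (hQ : IsQuantum Q) (L : KLI k) :
    (∀ X : Finset ℕ, (∀ p ∈ Q, ∀ i ∈ X, (p.2.r i).isSome) →
      qhom (qremoveR Q X) L = ∑ᶠ a : (↥X → L.I.R), qhom Q (L.reseatR X a)) ∧
    (∀ X : Finset (Fin k), (∀ p ∈ Q, ∀ j ∈ X, (p.2.b j).isSome) →
      qhom (qremoveB Q X) L = ∑ᶠ a : (↥X → L.I.B), qhom Q (L.reseatB X a)) ∧
    (∀ (g fT : GuardF k) (B : Finset (Fin k)),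
      (∀ p ∈ Q, p.2.g = g) → (∀ p ∈ Q, p.2.domB = B) → g.IsTransition fT →
      (qhom (qapplyTransition Q fT) L =
        (khom (KLI.guardKLI fT) L : ℝ) *
          (∑ᶠ a : (↥(B ∩ fT.img ∩ g.img) → L.I.B),
            qhom Q (L.reseatB (B ∩ fT.img ∩ g.img) a))) ∧
      (khom (KLI.guardKLI fT) L = 0 ∨ khom (KLI.guardKLI fT) L = 1)) := by
  classical
  refine ⟨?_, ?_, ?_⟩
  · -- (i)
    intro X hX
    letI : Fintype (↥X → L.I.R) := Fintype.ofFinite _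
    rw [finsum_eq_sum_of_fintype]
    have step : ∀ p ∈ Q, p.1 * ((khom (p.2.removeR X) L : ℕ) : ℝ) =
        ∑ a : ↥X → L.I.R, p.1 * (khom p.2 (L.reseatR X a) : ℝ) := by
      intro p hp
      rw [QhomAux.khom_removeR p.2 L X (hX p hp)]
      push_cast
      rw [Finset.mul_sum]
    calc qhom (qremoveR Q X) L
        = (Q.map fun p => p.1 * ((khom (p.2.removeR X) L : ℕ) : ℝ)).sum := by
          unfold qhom qremoveR
          rw [List.map_map]
          rfl
      _ = (Q.map fun p => ∑ a : ↥X → L.I.R, p.1 * (khom p.2 (L.reseatR X a) : ℝ)).sum :=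
          congrArg List.sum (List.map_congr_left step)
      _ = ∑ a : ↥X → L.I.R, (Q.map fun p => p.1 * (khom p.2 (L.reseatR X a) : ℝ)).sum :=
          QhomAux.list_sum_swap Q _
      _ = ∑ a : ↥X → L.I.R, qhom Q (L.reseatR X a) := rfl
  · -- (ii)
    intro X hX
    letI : Fintype (↥X → L.I.B) := Fintype.ofFinite _
    rw [finsum_eq_sum_of_fintype]
    have step : ∀ p ∈ Q, p.1 * ((khom (p.2.removeB X) L : ℕ) : ℝ) =
        ∑ a : ↥X → L.I.B, p.1 * (khom p.2 (L.reseatB X a) : ℝ) := by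
      intro p hp
      rw [QhomAux.khom_removeB p.2 L X (hX p hp)]
      push_cast
      rw [Finset.mul_sum]
    calc qhom (qremoveB Q X) L
        = (Q.map fun p => p.1 * ((khom (p.2.removeB X) L : ℕ) : ℝ)).sum := by
          unfold qhom qremoveB
          rw [List.map_map]
          rfl
      _ = (Q.map fun p => ∑ a : ↥X → L.I.B, p.1 * (khom p.2 (L.reseatB X a) : ℝ)).sum :=
          congrArg List.sum (List.map_congr_left step)
      _ = ∑ a : ↥X → L.I.B, (Q.map fun p => p.1 * (khom p.2 (L.reseatB X a) : ℝ)).sum :=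
          QhomAux.list_sum_swap Q _
      _ = ∑ a : ↥X → L.I.B, qhom Q (L.reseatB X a) := rfl
  · -- (iii)
    intro g fT B hg hB _htrans
    refine ⟨?_, QhomAux.khom_guardKLI_le_one fT L⟩
    set X : Finset (Fin k) := B ∩ fT.img ∩ g.img with hXdef
    set c : ℝ := (khom (KLI.guardKLI fT) L : ℝ) with hcdef
    letI : Fintype (↥X → L.I.B) := Fintype.ofFinite _
    rw [finsum_eq_sum_of_fintype]
    have hXsome : ∀ p ∈ Q, ∀ j ∈ X, (p.2.b j).isSome := by
      intro p hp j hj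
      have hjB : j ∈ B := (Finset.mem_inter.mp (Finset.mem_inter.mp hj).1).1
      have : j ∈ p.2.domB := by rw [hB p hp]; exact hjB
      simpa [KLI.domB] using this
    have step : ∀ p ∈ Q, p.1 * ((khom (p.2.applyTransition fT) L : ℕ) : ℝ) =
        c * ∑ a : ↥X → L.I.B, p.1 * (khom p.2 (L.reseatB X a) : ℝ) := by
      intro p hp
      have hXeq : p.2.g.img ∩ fT.img ∩ p.2.domB = X := by
        rw [hg p hp, hB p hp, hXdef]
        ext j
        simp only [Finset.mem_inter]
        tauto
      have happ : p.2.applyTransition fT = (KLI.guardKLI fT).glue (p.2.removeB X) := by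
        rw [KLI.applyTransition, hXeq]
      rw [happ, QhomAux.khom_glue, QhomAux.khom_removeB p.2 L X (hXsome p hp)]
      push_cast
      rw [mul_left_comm]
      exact congrArg (c * ·) (Finset.mul_sum _ _ _)
    calc qhom (qapplyTransition Q fT) L
        = (Q.map fun p => p.1 * ((khom (p.2.applyTransition fT) L : ℕ) : ℝ)).sum := by
          unfold qhom qapplyTransition
          rw [List.map_map]
          rfl
      _ = (Q.map fun p => c * ∑ a : ↥X → L.I.B, p.1 * (khom p.2 (L.reseatB X a) : ℝ)).sum :=
          congrArg List.sum (List.map_congr_left step)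
      _ = c * (Q.map fun p => ∑ a : ↥X → L.I.B, p.1 * (khom p.2 (L.reseatB X a) : ℝ)).sum :=
          QhomAux.list_sum_mul_left Q c _
      _ = c * ∑ a : ↥X → L.I.B, (Q.map fun p => p.1 * (khom p.2 (L.reseatB X a) : ℝ)).sum :=
          congrArg (c * ·) (QhomAux.list_sum_swap Q _)
      _ = c * ∑ a : ↥X → L.I.B, qhom Q (L.reseatB X a) := rfl
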